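/- Let S ⊆ ℝ^d be closed. Then ax(S) ⊆ π_{ax,S}(UBP(S)) ⊆ closure(ax(S)), where π_{ax,S}(p,u) = p + d(p,u,π_S)·u and UBP(S) is the set of pairs (p,u) with p ∈ S, |u| = 1, and 0 < d(p,u,π_S) < ∞. -/

import Mathlib

open Metric Set

noncomputable def proj {d : ℕ} (S : Set (EuclideanSpace ℝ (Fin d)))
    (x : EuclideanSpace ℝ (Fin d)) : Set (EuclideanSpace ℝ (Fin d)) :=
  {q ∈ S | dist x q = Metric.infDist x S}

def medialAxis {d : ℕ} (S : Set (EuclideanSpace ℝ (Fin d))) :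
    Set (EuclideanSpace ℝ (Fin d)) :=
  {x | (proj S x).Nontrivial}

/-- The projection range `d(p, u, π_S)`. -/
noncomputable def projRange {d : ℕ} (S : Set (EuclideanSpace ℝ (Fin d)))
    (p u : EuclideanSpace ℝ (Fin d)) : ℝ :=
  sSup {l : ℝ | proj S (p + l • u) = {p}}

/-- The set of unit back projection pairs `UBP(S)`. -/
def UBP {d : ℕ} (S : Set (EuclideanSpace ℝ (Fin d))) :
    Set (EuclideanSpace ℝ (Fin d) × EuclideanSpace ℝ (Fin d)) :=
  {pu | pu.1 ∈ S ∧ ‖pu.2‖ = 1 ∧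
    BddAbove {l : ℝ | proj S (pu.1 + l • pu.2) = {pu.1}} ∧
    0 < projRange S pu.1 pu.2}

open RealInnerProductSpace

section Aux

variable {d : ℕ} {S : Set (EuclideanSpace ℝ (Fin d))}

lemma mem_proj_iff {x q : EuclideanSpace ℝ (Fin d)} :
    q ∈ proj S x ↔ q ∈ S ∧ dist x q = infDist x S := Iff.rfl

lemma le_infDist' {x : EuclideanSpace ℝ (Fin d)} {b : ℝ} (hs : S.Nonempty)
    (h : ∀ y ∈ S, b ≤ dist x y) : b ≤ infDist x S := by
  by_contra hlt
  push_neg at hlt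
  obtain ⟨y, hy, hd⟩ := (infDist_lt_iff hs).mp hlt
  exact absurd hd (not_lt.mpr (h y hy))

lemma proj_self {p : EuclideanSpace ℝ (Fin d)} (hp : p ∈ S) : proj S p = {p} := by
  ext q
  simp only [proj, mem_sep_iff, mem_singleton_iff, infDist_zero_of_mem hp]
  constructor
  · rintro ⟨-, h⟩
    exact (dist_eq_zero.mp h).symm
  · rintro rfl
    exact ⟨hp, dist_self _⟩

lemma proj_nonempty (hS : IsClosed S) (hne : S.Nonempty) (x : EuclideanSpace ℝ (Fin d)) :
    (proj S x).Nonempty := by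
  obtain ⟨y, hy, h⟩ := hS.exists_infDist_eq_dist hne x
  exact ⟨y, hy, h.symm⟩

/-- Segment lemma: a point strictly between `q` and `y`, where `q` is a nearest point of `y`,
has `{q}` as its full set of nearest points. -/
lemma proj_segment (hS : IsClosed S) {y q : EuclideanSpace ℝ (Fin d)} (hq : q ∈ proj S y)
    (hyq : 0 < dist y q) {τ : ℝ} (h0 : 0 < τ) (h1 : τ < 1) :
    proj S (q + τ • (y - q)) = {q} := by
  have hqS : q ∈ S := hq.1
  have hD : dist y q = infDist y S := hq.2
  set z := q + τ • (y - q) with hzdef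
  have hzq : dist z q = τ * dist y q := by
    rw [dist_eq_norm, dist_eq_norm]
    have : z - q = τ • (y - q) := by rw [hzdef]; abel
    rw [this, norm_smul, Real.norm_eq_abs, abs_of_pos h0]
  have hyz : dist y z = (1 - τ) * dist y q := by
    rw [dist_eq_norm, dist_eq_norm]
    have : y - z = (1 - τ) • (y - q) := by rw [hzdef]; module
    rw [this, norm_smul, Real.norm_eq_abs, abs_of_pos (by linarith)]
  have hlow : ∀ s ∈ S, τ * dist y q ≤ dist z s := by
    intro s hs
    have h1' : dist y q ≤ dist y s := hD ▸ infDist_le_dist_of_mem hs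
    have h2' : dist y s ≤ dist y z + dist z s := dist_triangle _ _ _
    rw [hyz] at h2'
    linarith
  have hinf : infDist z S = τ * dist y q := by
    refine le_antisymm ?_ (le_infDist' ⟨q, hqS⟩ hlow)
    calc infDist z S ≤ dist z q := infDist_le_dist_of_mem hqS
    _ = τ * dist y q := hzq
  ext s
  simp only [mem_proj_iff, mem_singleton_iff]
  constructor
  · rintro ⟨hsS, hdist⟩
    rw [hinf] at hdist
    have hys : dist y s = dist y q := by
      refine le_antisymm ?_ (hD ▸ infDist_le_dist_of_mem hsS)
      calc dist y s ≤ dist y z + dist z s := dist_triangle _ _ _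
      _ = dist y q := by rw [hyz, hdist]; ring
    have htri : ‖(z - y) + (s - z)‖ = ‖z - y‖ + ‖s - z‖ := by
      have he : (z - y) + (s - z) = s - y := by abel
      rw [he, ← dist_eq_norm' y s, ← dist_eq_norm' y z, ← dist_eq_norm' z s, hys, hyz, hdist]
      ring
    have hray : SameRay ℝ (z - y) (s - z) := sameRay_iff_norm_add.mpr htri
    have hzy : z - y = (1 - τ) • (q - y) := by rw [hzdef]; module
    have hzyne : z - y ≠ 0 := by
      rw [← dist_eq_norm'] at *
      intro h
      have : dist y z = 0 := by rw [dist_eq_norm]; simp [show y - z = -(z-y) by abel, h]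
      rw [hyz] at this
      nlinarith
    obtain ⟨c, hc0, hc⟩ := hray.exists_nonneg_left hzyne
    have hnormc : c * ((1 - τ) * dist y q) = τ * dist y q := by
      have h1n : ‖s - z‖ = τ * dist y q := by rw [← dist_eq_norm' z s, hdist]
      have h2n : ‖z - y‖ = (1 - τ) * dist y q := by
        rw [hzy, norm_smul, Real.norm_eq_abs, abs_of_pos (by linarith : (0:ℝ) < 1 - τ),
          ← dist_eq_norm' y q, dist_comm]
      rw [← h1n, ← hc, norm_smul, Real.norm_eq_abs, abs_of_nonneg hc0, h2n]
    have hcval : c * (1 - τ) = τ := by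
      have hDpos : 0 < dist y q := hyq
      have := hnormc
      field_simp at this ⊢
      nlinarith
    have hsz : s - z = τ • (q - y) := by
      rw [← hc, hzy, smul_smul, hcval]
    have : s = q := by
      have : s = z + τ • (q - y) := by rw [← hsz]; abel
      rw [this, hzdef]; module
    exact this
  · rintro rfl
    exact ⟨hqS, by rw [hzq, hinf]⟩

/-- If `q` is the unique nearest point of `y` and `v` has positive inner product with `y - q`,
then moving from `y` in direction `v` strictly increases the distance to `S`. -/
lemma infDist_increase (hS : IsClosed S) (hne : S.Nonempty)
    {y q v : EuclideanSpace ℝ (Fin d)} (hproj : proj S y = {q})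
    (hv : 0 < ⟪v, y - q⟫) :
    ∃ h₀ > 0, ∀ h : ℝ, 0 < h → h < h₀ → infDist y S < infDist (y + h • v) S := by
  by_contra hcon
  push_neg at hcon
  have hcon' : ∀ n : ℕ, ∃ h : ℝ, 0 < h ∧ h < 1/(n+1) ∧ infDist (y + h • v) S ≤ infDist y S := by
    intro n
    obtain ⟨h, h1, h2, h3⟩ := hcon (1/(n+1)) (by positivity)
    exact ⟨h, h1, h2, h3⟩
  choose h hh0 hhlt hle using hcon'
  have hqy : q ∈ proj S y := by rw [hproj]; exact rfl
  set D := infDist y S with hDdef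
  have hDq : dist y q = D := hqy.2
  choose s hsmem using fun n => proj_nonempty hS hne (y + h n • v)
  have hsS : ∀ n, s n ∈ S := fun n => (hsmem n).1
  have hexp : ∀ n, dist (y + h n • v) (s n) ^ 2
      = dist y (s n) ^ 2 + 2 * h n * ⟪v, y - s n⟫ + (h n)^2 * ‖v‖^2 := by
    intro n
    rw [dist_eq_norm, dist_eq_norm]
    have e : y + h n • v - s n = (y - s n) + h n • v := by abel
    rw [e, norm_add_sq_real, real_inner_smul_right, norm_smul, Real.norm_eq_abs, mul_pow,
      sq_abs, real_inner_comm]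
    ring
  have hkey : ∀ n, ⟪v, y - s n⟫ ≤ 0 := by
    intro n
    have h1 : dist (y + h n • v) (s n) ≤ D := by
      rw [(hsmem n).2]
      calc infDist (y + h n • v) S ≤ infDist y S := hle n
      _ = D := rfl
    have h2 : D ≤ dist y (s n) := hDdef ▸ infDist_le_dist_of_mem (hsS n)
    have h3 := hexp n
    have h4 : (0:ℝ) ≤ dist (y + h n • v) (s n) := dist_nonneg
    have h5 : (0:ℝ) ≤ D := hDdef ▸ infDist_nonneg
    nlinarith [hh0 n, sq_nonneg (h n), sq_nonneg ‖v‖, mul_pos (hh0 n) (hh0 n)]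
  -- the nearest points converge to q along a subsequence
  have hbox : ∀ n, s n ∈ closedBall y (D + ‖v‖) := by
    intro n
    rw [mem_closedBall, dist_comm]
    calc dist y (s n) ≤ dist y (y + h n • v) + dist (y + h n • v) (s n) := dist_triangle _ _ _
    _ ≤ ‖h n • v‖ + D := by
        gcongr
        · rw [dist_eq_norm]; simp [show y - (y + h n • v) = -(h n • v) by abel]
        · rw [(hsmem n).2]; exact hle n
    _ ≤ ‖v‖ + D := by
        gcongr
        rw [norm_smul, Real.norm_eq_abs, abs_of_pos (hh0 n)]
        have : h n < 1 := lt_of_lt_of_le (hhlt n) (by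
          rw [div_le_one (by positivity)]; linarith [Nat.cast_nonneg (α := ℝ) n])
        nlinarith [norm_nonneg v, hh0 n]
    _ = D + ‖v‖ := by ring
  obtain ⟨w, hw, φ, hφ, hlim⟩ := (isCompact_closedBall y (D + ‖v‖)).tendsto_subseq hbox
  have hwS : w ∈ S := hS.mem_of_tendsto hlim (Filter.Eventually.of_forall fun n => hsS (φ n))
  have hh_tend : Filter.Tendsto (fun n => h (φ n)) Filter.atTop (nhds 0) := by
    have h1 : Filter.Tendsto (fun n : ℕ => 1/((n:ℝ)+1)) Filter.atTop (nhds 0) :=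
      tendsto_one_div_add_atTop_nhds_zero_nat
    refine squeeze_zero (fun n => (hh0 (φ n)).le) (fun n => ?_) h1
    calc h (φ n) ≤ 1/((φ n : ℝ)+1) := (hhlt (φ n)).le
    _ ≤ 1/((n:ℝ)+1) := by
        apply one_div_le_one_div_of_le (by positivity)
        have : n ≤ φ n := hφ.le_apply
        have h2 : (n:ℝ) ≤ (φ n : ℝ) := by exact_mod_cast this
        linarith
  have hdist_tend : Filter.Tendsto (fun n => dist y (s (φ n))) Filter.atTop (nhds (dist y w)) :=
    Filter.Tendsto.dist tendsto_const_nhds hlim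
  have hyw : dist y w = D := by
    refine le_antisymm ?_ (hDdef ▸ infDist_le_dist_of_mem hwS)
    have hbound : ∀ n, dist y (s (φ n)) ≤ h (φ n) * ‖v‖ + D := by
      intro n
      calc dist y (s (φ n)) ≤ dist y (y + h (φ n) • v) + dist (y + h (φ n) • v) (s (φ n)) :=
            dist_triangle _ _ _
      _ ≤ h (φ n) * ‖v‖ + D := by
          gcongr
          · rw [dist_eq_norm]
            simp [show y - (y + h (φ n) • v) = -(h (φ n) • v) by abel, norm_smul,
              abs_of_pos (hh0 (φ n))]
          · rw [(hsmem (φ n)).2]; exact hle (φ n)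
    have htend2 : Filter.Tendsto (fun n => h (φ n) * ‖v‖ + D) Filter.atTop (nhds (0 * ‖v‖ + D)) :=
      Filter.Tendsto.add (hh_tend.mul tendsto_const_nhds) tendsto_const_nhds
    have := le_of_tendsto_of_tendsto hdist_tend htend2
      (Filter.Eventually.of_forall hbound)
    simpa using this
  have hwq : w = q := by
    have : w ∈ proj S y := ⟨hwS, by rw [hyw]⟩
    rw [hproj] at this
    exact this
  have hinner_tend : Filter.Tendsto (fun n => ⟪v, y - s (φ n)⟫) Filter.atTop
      (nhds ⟪v, y - w⟫) :=
    Filter.Tendsto.inner tendsto_const_nhds (tendsto_const_nhds.sub hlim)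
  have hfin : ⟪v, y - w⟫ ≤ 0 :=
    le_of_tendsto hinner_tend (Filter.Eventually.of_forall fun n => hkey (φ n))
  rw [hwq] at hfin
  linarith

end Aux

set_option maxHeartbeats 2000000 in
theorem stmt8 {d : ℕ} (S : Set (EuclideanSpace ℝ (Fin d))) (hS : IsClosed S)
    (hne : S.Nonempty) :
    medialAxis S ⊆ (fun pu => pu.1 + projRange S pu.1 pu.2 • pu.2) '' UBP S ∧
    (fun pu => pu.1 + projRange S pu.1 pu.2 • pu.2) '' UBP S ⊆
      closure (medialAxis S) := by
  constructor
  · -- first inclusion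
    intro x hx
    obtain ⟨q₁, hq₁, q₂, hq₂, hq12⟩ := hx
    have hq₁S : q₁ ∈ S := hq₁.1
    have hxS : x ∉ S := by
      intro hxS
      have h1 : q₁ = x := by
        have h := hq₁.2
        rw [infDist_zero_of_mem hxS] at h
        exact (dist_eq_zero.mp h).symm
      have h2 : q₂ = x := by
        have h := hq₂.2
        rw [infDist_zero_of_mem hxS] at h
        exact (dist_eq_zero.mp h).symm
      exact hq12 (h1.trans h2.symm)
    set r := infDist x S with hrdef
    have hr0 : 0 < r := (hS.notMem_iff_infDist_pos hne).mp hxS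
    have hdxq : dist x q₁ = r := hq₁.2
    set u : EuclideanSpace ℝ (Fin d) := r⁻¹ • (x - q₁) with hudef
    have hnormxq : ‖x - q₁‖ = r := by rw [← dist_eq_norm]; exact hdxq
    have hu : ‖u‖ = 1 := by
      rw [hudef, norm_smul, Real.norm_eq_abs, abs_of_pos (inv_pos.mpr hr0), hnormxq]
      field_simp
    have hru : r • u = x - q₁ := by
      rw [hudef, smul_smul, mul_inv_cancel₀ (ne_of_gt hr0), one_smul]
    have hray : ∀ l : ℝ, q₁ + l • u = q₁ + (l/r) • (x - q₁) := by
      intro l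
      rw [hudef, smul_smul, div_eq_mul_inv]
    set L := {l : ℝ | proj S (q₁ + l • u) = {q₁}} with hLdef
    have hmemL : ∀ l : ℝ, 0 ≤ l → l < r → l ∈ L := by
      intro l hl0 hlr
      rcases eq_or_lt_of_le hl0 with rfl | hl0'
      · show proj S (q₁ + (0:ℝ) • u) = {q₁}
        rw [zero_smul, add_zero]
        exact proj_self hq₁S
      · show proj S (q₁ + l • u) = {q₁}
        have hseg := proj_segment hS hq₁ (by rw [hdxq]; exact hr0)
          (div_pos hl0' hr0) ((div_lt_one hr0).mpr hlr)
        rw [hray l]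
        exact hseg
    have hub : ∀ l ∈ L, l ≤ r := by
      intro l hl
      by_contra hlr
      push_neg at hlr
      have hl0 : 0 < l := lt_trans hr0 hlr
      have hproj : proj S (q₁ + l • u) = {q₁} := hl
      have hq₁mem : q₁ ∈ proj S (q₁ + l • u) := by rw [hproj]; rfl
      have hd : dist (q₁ + l • u) q₁ = l := by
        rw [dist_eq_norm]
        have e : q₁ + l • u - q₁ = l • u := by abel
        rw [e, norm_smul, Real.norm_eq_abs, hu, abs_of_pos hl0, mul_one]
      have hseg := proj_segment hS hq₁mem (by rw [hd]; exact hl0)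
        (div_pos hr0 hl0) ((div_lt_one hl0).mpr hlr)
      have hxeq : q₁ + (r/l) • ((q₁ + l • u) - q₁) = x := by
        have e : (q₁ + l • u) - q₁ = l • u := by abel
        rw [e, smul_smul, div_mul_cancel₀ _ (ne_of_gt hl0), hru]
        abel
      rw [hxeq] at hseg
      rw [hseg, mem_singleton_iff] at hq₂
      exact hq12 hq₂.symm
    have hbdd : BddAbove L := ⟨r, hub⟩
    have hLne : L.Nonempty := ⟨0, hmemL 0 le_rfl hr0⟩
    have hsup : sSup L = r := by
      refine le_antisymm (csSup_le hLne hub) ?_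
      by_contra hlt
      push_neg at hlt
      set m := max (sSup L) 0 with hm
      have hmr : m < r := max_lt hlt hr0
      have h0m : 0 ≤ m := le_max_right _ _
      have hml : (m + r)/2 ∈ L := hmemL _ (by linarith) (by linarith)
      have h1 := le_csSup hbdd hml
      have h2 : (m + r)/2 ≤ m := h1.trans (le_max_left _ _)
      linarith
    have hRr : projRange S q₁ u = r := hsup
    refine ⟨(q₁, u), ⟨hq₁S, hu, hbdd, ?_⟩, ?_⟩
    · show 0 < projRange S q₁ u
      rw [hRr]; exact hr0
    · show q₁ + projRange S q₁ u • u = x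
      rw [hRr, hru]
      abel
  · -- second inclusion
    rintro x ⟨⟨p, u⟩, ⟨hpS, hu, hbdd, hpos⟩, rfl⟩
    show p + projRange S p u • u ∈ closure (medialAxis S)
    set L := {l : ℝ | proj S (p + l • u) = {p}} with hLdef
    obtain ⟨R, hRsup⟩ : ∃ R : ℝ, R = sSup L := ⟨_, rfl⟩
    have hRdef : projRange S p u = R := by rw [hRsup]; rfl
    rw [hRdef] at hpos ⊢
    have hR0 : 0 < R := hpos
    have hLne : L.Nonempty := by
      by_contra hemp
      rw [not_nonempty_iff_eq_empty] at hemp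
      rw [hRsup, hemp, Real.sSup_empty] at hR0
      exact lt_irrefl 0 hR0
    have hdistu : ∀ l : ℝ, 0 ≤ l → dist (p + l • u) p = l := by
      intro l hl
      rw [dist_eq_norm]
      have e : p + l • u - p = l • u := by abel
      rw [e, norm_smul, Real.norm_eq_abs, hu, abs_of_nonneg hl, mul_one]
    have hmemL : ∀ l : ℝ, 0 ≤ l → l < R → l ∈ L := by
      intro l hl0 hlR
      obtain ⟨l', hl'L, hll'⟩ := exists_lt_of_lt_csSup hLne (hRsup ▸ hlR)
      rcases eq_or_lt_of_le hl0 with rfl | hl0'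
      · show proj S (p + (0:ℝ) • u) = {p}
        rw [zero_smul, add_zero]
        exact proj_self hpS
      · have hl'0 : 0 < l' := lt_trans hl0' hll'
        have hproj' : proj S (p + l' • u) = {p} := hl'L
        have hq : p ∈ proj S (p + l' • u) := by rw [hproj']; rfl
        have hseg := proj_segment hS hq (by rw [hdistu l' hl'0.le]; exact hl'0)
          (div_pos hl0' hl'0) ((div_lt_one hl'0).mpr hll')
        have e : p + (l/l') • ((p + l' • u) - p) = p + l • u := by
          have e2 : (p + l' • u) - p = l' • u := by abel
          rw [e2, smul_smul, div_mul_cancel₀ _ (ne_of_gt hl'0)]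
        show proj S (p + l • u) = {p}
        rw [← e]
        exact hseg
    have hinfl : ∀ l : ℝ, 0 ≤ l → l < R → infDist (p + l • u) S = l := by
      intro l h0 hR'
      have hq : p ∈ proj S (p + l • u) := by
        have := hmemL l h0 hR'
        rw [show (proj S (p + l • u) = {p}) from this]
        rfl
      rw [← hq.2, hdistu l h0]
    set x := p + R • u with hxdef
    have hinfx : infDist x S = R := by
      refine le_antisymm (by rw [← hdistu R hR0.le]; exact infDist_le_dist_of_mem hpS) ?_
      by_contra hlt
      push_neg at hlt
      obtain ⟨I, hI⟩ : ∃ I, I = infDist x S := ⟨_, rfl⟩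
      rw [← hI] at hlt
      have hI0 : 0 ≤ I := by rw [hI]; exact infDist_nonneg
      obtain ⟨l, hldef⟩ : ∃ l : ℝ, l = (I + 3*R)/4 := ⟨_, rfl⟩
      have h0l : 0 ≤ l := by rw [hldef]; linarith
      have hlR : l < R := by rw [hldef]; linarith
      have h1 : infDist (p + l • u) S ≤ I + dist (p + l • u) x := by
        rw [hI]; exact infDist_le_infDist_add_dist
      have h2 : dist (p + l • u) x = R - l := by
        rw [dist_eq_norm, hxdef]
        have e : p + l • u - (p + R • u) = (l - R) • u := by module
        rw [e, norm_smul, Real.norm_eq_abs, hu, mul_one, abs_of_nonpos (by linarith), neg_sub]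
      rw [hinfl l h0l hlR, h2] at h1
      linarith
    have hpx : p ∈ proj S x := ⟨hpS, by rw [hinfx, hdistu R hR0.le]⟩
    by_cases hax : (proj S x).Nontrivial
    · exact subset_closure hax
    · have hsingx : proj S x = {p} := (not_nontrivial_iff.mp hax).eq_singleton_of_mem hpx
      rw [Metric.mem_closure_iff]
      by_contra hcl
      push_neg at hcl
      obtain ⟨ε, hε, hfar⟩ := hcl
      have hss : ∀ z, dist x z < ε → (proj S z).Subsingleton := by
        intro z hz
        by_contra hns
        rw [not_subsingleton_iff] at hns
        exact absurd hz (not_lt.mpr (hfar z hns))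
      obtain ⟨s₀, hs₀def⟩ : ∃ a : ℝ, a = min (ε/2) (R/2) := ⟨_, rfl⟩
      have hs₀ : 0 < s₀ := by rw [hs₀def]; exact lt_min (by linarith) (by linarith)
      have hs₀ε : s₀ < ε := by
        rw [hs₀def]; exact lt_of_le_of_lt (min_le_left _ _) (by linarith)
      have hs₀R : s₀ < R := by
        rw [hs₀def]; exact lt_of_le_of_lt (min_le_right _ _) (by linarith)
      obtain ⟨y, hyK, hymax⟩ := (isCompact_closedBall x s₀).exists_isMaxOn
        ⟨x, mem_closedBall_self hs₀.le⟩ ((continuous_infDist_pt S).continuousOn)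
      obtain ⟨D, hDdef⟩ : ∃ D, D = infDist y S := ⟨_, rfl⟩
      have hRD : R ≤ D := by
        rw [hDdef, ← hinfx]
        exact hymax (mem_closedBall_self hs₀.le)
      have hD0 : 0 < D := lt_of_lt_of_le hR0 hRD
      have hysub : (proj S y).Subsingleton := by
        apply hss
        rw [dist_comm]
        exact lt_of_le_of_lt (mem_closedBall.mp hyK) hs₀ε
      obtain ⟨q, hqy⟩ := proj_nonempty hS hne y
      have hprojy : proj S y = {q} := hysub.eq_singleton_of_mem hqy
      have hyqD : dist y q = D := by rw [hDdef]; exact hqy.2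
      have hyq0 : 0 < dist y q := by rw [hyqD]; exact hD0
      have hnormyq : ‖y - q‖ = D := by rw [← dist_eq_norm]; exact hyqD
      -- no admissible direction increases the distance
      have hnotdir : ∀ v : EuclideanSpace ℝ (Fin d),
          (∃ h₁ > 0, ∀ h : ℝ, 0 < h → h < h₁ → y + h • v ∈ closedBall x s₀) →
          ⟪v, y - q⟫ ≤ 0 := by
        rintro v ⟨h₁, hh₁, hmem⟩
        by_contra hvpos
        push_neg at hvpos
        obtain ⟨h₀, hh₀, hinc⟩ := infDist_increase hS hne hprojy hvpos
        set h := min h₀ h₁ / 2 with hhdef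
        have hh : 0 < h := by positivity
        have hlt0 : h < h₀ := lt_of_lt_of_le (by rw [hhdef]; linarith [min_le_left h₀ h₁, lt_min hh₀ hh₁]) (min_le_left h₀ h₁)
        have hlt1 : h < h₁ := lt_of_lt_of_le (by rw [hhdef]; linarith [min_le_right h₀ h₁, lt_min hh₀ hh₁]) (min_le_right h₀ h₁)
        have hgt := hinc h hh hlt0
        exact absurd (hymax (hmem h hh hlt1)) (not_le.mpr hgt)
      have hyx : dist y x ≤ s₀ := mem_closedBall.mp hyK
      rcases lt_or_eq_of_le hyx with hcase | hcase
      · -- interior maximum: impossible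
        have hadm : ∃ h₁ > 0, ∀ h : ℝ, 0 < h → h < h₁ →
            y + h • (y - q) ∈ closedBall x s₀ := by
          refine ⟨(s₀ - dist y x)/D, div_pos (by linarith) hD0, fun h hh0' hhlt' => ?_⟩
          rw [mem_closedBall]
          calc dist (y + h • (y - q)) x ≤ dist (y + h • (y - q)) y + dist y x :=
                dist_triangle _ _ _
          _ ≤ h * D + dist y x := by
              gcongr
              rw [dist_eq_norm]
              have e : y + h • (y - q) - y = h • (y - q) := by abel
              rw [e, norm_smul, Real.norm_eq_abs, abs_of_pos hh0', hnormyq]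
          _ ≤ s₀ := by
              have hb : h * D < s₀ - dist y x := (lt_div_iff₀ hD0).mp hhlt'
              linarith
        have h1 := hnotdir (y - q) hadm
        rw [real_inner_self_eq_norm_sq, hnormyq] at h1
        nlinarith
      · -- boundary maximum: colinearity
        obtain ⟨n, hndef⟩ : ∃ n : EuclideanSpace ℝ (Fin d), n = y - x := ⟨_, rfl⟩
        have hnorm_n : ‖n‖ = s₀ := by rw [hndef, ← dist_eq_norm]; exact hcase
        have hn0 : n ≠ 0 := by
          intro h
          rw [h, norm_zero] at hnorm_n
          exact absurd hnorm_n.symm (ne_of_gt hs₀)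
        have hv : ∀ v : EuclideanSpace ℝ (Fin d), ⟪v, n⟫ < 0 → ⟪v, y - q⟫ ≤ 0 := by
          intro v hvn
          apply hnotdir
          have hv0 : v ≠ 0 := by
            intro h
            rw [h, inner_zero_left] at hvn
            exact lt_irrefl 0 hvn
          refine ⟨2 * (-⟪v, n⟫) / ‖v‖^2,
            div_pos (by linarith) (pow_pos (norm_pos_iff.mpr hv0) 2), fun h hh0' hhlt' => ?_⟩
          rw [mem_closedBall, dist_eq_norm]
          have e : y + h • v - x = n + h • v := by rw [hndef]; abel
          rw [e]
          have hsq : ‖n + h • v‖^2 = s₀^2 + 2*h*⟪v, n⟫ + h^2 * ‖v‖^2 := by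
            rw [norm_add_sq_real, hnorm_n, real_inner_smul_right, norm_smul,
              Real.norm_eq_abs, mul_pow, sq_abs, real_inner_comm]
            ring
          have hb : h * ‖v‖^2 < 2 * (-⟪v, n⟫) :=
            (lt_div_iff₀ (pow_pos (norm_pos_iff.mpr hv0) 2)).mp hhlt'
          have hle2 : ‖n + h • v‖^2 ≤ s₀^2 := by
            rw [hsq]
            nlinarith [mul_lt_mul_of_pos_left hb hh0']
          nlinarith [norm_nonneg (n + h • v), hs₀, hle2]
        have hnW : 0 ≤ ⟪n, y - q⟫ := by
          have := hv (-n) (by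
            rw [inner_neg_left, real_inner_self_eq_norm_sq, hnorm_n]
            nlinarith)
          rw [inner_neg_left] at this
          linarith
        obtain ⟨c, hcdef⟩ : ∃ c : ℝ, c = ⟪n, y - q⟫ / s₀^2 := ⟨_, rfl⟩
        obtain ⟨v₀, hv₀def⟩ : ∃ v₀ : EuclideanSpace ℝ (Fin d), v₀ = (y - q) - c • n := ⟨_, rfl⟩
        have hWn : ⟪v₀, n⟫ = 0 := by
          rw [hv₀def, inner_sub_left, real_inner_smul_left, real_inner_self_eq_norm_sq,
            hnorm_n, hcdef, real_inner_comm]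
          field_simp
          ring
        have hv₀W : ⟪v₀, y - q⟫ = ‖v₀‖^2 := by
          have e : (y - q) = v₀ + c • n := by rw [hv₀def]; abel
          rw [e, inner_add_right, real_inner_smul_right, hWn, real_inner_self_eq_norm_sq]
          ring
        have hv₀0 : ‖v₀‖^2 ≤ 0 := by
          by_contra hpos'
          push_neg at hpos'
          have hd : (0:ℝ) < 2 * ⟪n, y - q⟫ + 1 := by linarith
          obtain ⟨δ, hδdef⟩ : ∃ δ : ℝ, δ = ‖v₀‖^2 / (2 * ⟪n, y - q⟫ + 1) := ⟨_, rfl⟩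
          have hδ0 : 0 < δ := by rw [hδdef]; exact div_pos hpos' hd
          have hinner : ⟪v₀ - δ • n, n⟫ < 0 := by
            rw [inner_sub_left, hWn, real_inner_smul_left, real_inner_self_eq_norm_sq, hnorm_n]
            have := mul_pos hδ0 (pow_pos hs₀ 2)
            linarith
          have hest := hv _ hinner
          rw [inner_sub_left, hv₀W, real_inner_smul_left] at hest
          have hmul : δ * (2 * ⟪n, y - q⟫ + 1) = ‖v₀‖^2 := by
            rw [hδdef, div_mul_cancel₀ _ (ne_of_gt hd)]
          nlinarith [mul_le_mul_of_nonneg_right hest hd.le]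
        have hv₀eq : v₀ = 0 := by
          have : ‖v₀‖ = 0 := by nlinarith [norm_nonneg v₀]
          exact norm_eq_zero.mp this
        have hWc : y - q = c • n := by
          have := hv₀eq
          rw [hv₀def] at this
          have := sub_eq_zero.mp this
          exact this
        have hc0 : 0 ≤ c := by rw [hcdef]; exact div_nonneg hnW (by positivity)
        have hcs : c * s₀ = D := by
          have := hnormyq
          rw [hWc, norm_smul, Real.norm_eq_abs, abs_of_nonneg hc0, hnorm_n] at this
          exact this
        have hcD : c = D / s₀ := by
          rw [eq_div_iff (ne_of_gt hs₀)]
          exact hcs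
        -- x strictly between q and y
        have hyx' : y - x = (s₀ / D) • (y - q) := by
          rw [hWc, smul_smul, hcD]
          have h6 : s₀ / D * (D / s₀) = 1 := by field_simp
          rw [h6, one_smul]
          exact hndef.symm
        have hxq : x = q + (1 - s₀/D) • (y - q) := by
          have e1 : x = y - (s₀/D) • (y - q) := by
            rw [← hyx']; abel
          rw [e1]; module
        have hτ0 : 0 < 1 - s₀/D := by
          rw [sub_pos]
          exact (div_lt_one hD0).mpr (lt_of_lt_of_le hs₀R hRD)
        have hτ1 : 1 - s₀/D < 1 := by
          have : 0 < s₀/D := div_pos hs₀ hD0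
          linarith
        have hsegx := proj_segment hS hqy hyq0 hτ0 hτ1
        rw [← hxq] at hsegx
        have hqp : q = p := by
          rw [hsegx] at hsingx
          exact singleton_eq_singleton_iff.mp hsingx
        -- conclude y = p + (R + s₀) • u
        have hc' : (0:ℝ) < 1 - s₀/D := hτ0
        have hWu : (1 - s₀/D) • (y - p) = R • u := by
          have := hxq
          rw [hqp, hxdef] at this
          have e : p + R • u - p = (1 - s₀/D) • (y - p) := by
            nth_rewrite 1 [this]; abel
          rw [← e]; abel
        have hyp : y - p = (R / (1 - s₀/D)) • u := by
          have h4 := congrArg (fun z => (1 - s₀/D)⁻¹ • z) hWu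
          simp only [smul_smul, inv_mul_cancel₀ (ne_of_gt hc'), one_smul] at h4
          rw [h4]
          congr 1
          field_simp
        have hnormyp : ‖y - p‖ = D := by rw [← hqp]; exact hnormyq
        have hRc : R / (1 - s₀/D) = D := by
          have h1 : ‖(R / (1 - s₀/D)) • u‖ = R / (1 - s₀/D) := by
            rw [norm_smul, Real.norm_eq_abs, hu, mul_one,
              abs_of_pos (div_pos hR0 hc')]
          rw [← hyp] at h1
          rw [h1] at hnormyp
          exact hnormyp
        have hDRs : D = R + s₀ := by
          have h1 := hRc
          rw [div_eq_iff (ne_of_gt hc')] at h1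
          have h2 : D * (1 - s₀/D) = D - s₀ := by field_simp
          rw [h2] at h1
          linarith
        have hyeq : y = p + (R + s₀) • u := by
          have h5 : y - p = (R + s₀) • u := by rw [hyp, hRc, hDRs]
          rw [← h5]
          abel
        have hmem : (R + s₀) ∈ L := by
          show proj S (p + (R + s₀) • u) = {p}
          rw [← hyeq, hprojy, hqp]
        have := le_csSup hbdd hmem
        rw [← hRsup] at this
        linarith
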